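/- If x → x' is a move in NIM(k+1,k) and B(x') is even, then B(x') < B(x). -/

import Mathlib

/-- `z` is a basic position with parameter `b`: coordinate sum `k*b`, all coordinates
at most `b`, all coordinates even if `b` is even, exactly one even if `b` is odd. -/
def IsBasic (k : ℕ) (z : Fin (k+1) → ℕ) (b : ℕ) : Prop :=
  (∑ i, z i) = k * b ∧ (∀ i, z i ≤ b) ∧
    (Even b → ∀ i, Even (z i)) ∧ (Odd b → ∃! i, Even (z i))

/-- `Pre k y x` means `y ⪯ x`: the sorted vector of `y` is componentwise ≤ that of `x`. -/
def Pre (k : ℕ) (y x : Fin (k+1) → ℕ) : Prop :=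
  ∀ i, (y ∘ Tuple.sort y) i ≤ (x ∘ Tuple.sort x) i

/-- `BVal k x = max { b : some basic z with parameter b satisfies z ⪯ x }`. -/
noncomputable def BVal (k : ℕ) (x : Fin (k+1) → ℕ) : ℕ :=
  sSup {b | ∃ z, IsBasic k z b ∧ Pre k z x}

/-- A move in NIM(k+1,k): keep coordinate `i`, decrease every other (positive) coordinate by 1. -/
def MoveK (k : ℕ) (x y : Fin (k+1) → ℕ) : Prop :=
  ∃ i, (∀ j, j ≠ i → 0 < x j) ∧ ∀ j, y j = if j = i then x j else x j - 1

/-- The M-move: keep a smallest even coordinate if one exists, otherwise keep a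
largest coordinate; decrease the other k (positive) coordinates by 1. -/
def MMove (k : ℕ) (x y : Fin (k+1) → ℕ) : Prop :=
  ∃ i, (∀ j, j ≠ i → 0 < x j) ∧
    ((∃ j, Even (x j)) → Even (x i) ∧ ∀ j, Even (x j) → x i ≤ x j) ∧
    ((∀ j, Odd (x j)) → ∀ j, x j ≤ x i) ∧
    (∀ j, y j = if j = i then x j else x j - 1)

/-- Exceptional position: all coordinates odd, all `< m`, and `|x| = k*m + k - 1`
for some even `m`. -/
def Exceptional (k : ℕ) (x : Fin (k+1) → ℕ) : Prop :=
  ∃ m, Even m ∧ (∀ i, Odd (x i)) ∧ (∀ i, x i < m) ∧ (∑ i, x i) = k * m + k - 1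

/-- `MVal k x m`: playing the M-rule from `x`, the game ends after exactly `m` moves. -/
inductive MVal (k : ℕ) : (Fin (k+1) → ℕ) → ℕ → Prop
  | zero (x) : (¬ ∃ y, MoveK k x y) → MVal k x 0
  | succ (x y m) : MMove k x y → MVal k y m → MVal k x (m + 1)


section Aux

open Finset

/-- Pointwise domination implies domination of sorted rearrangements. -/
lemma sorted_le_sorted {n : ℕ} (u v : Fin n → ℕ) (h : ∀ i, u i ≤ v i) (i : Fin n) :
    (u ∘ Tuple.sort u) i ≤ (v ∘ Tuple.sort v) i := by
  classical
  set A := (Finset.Iic i).image (Tuple.sort v) with hA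
  set B := (Finset.Ici i).image (Tuple.sort u) with hB
  have hAcard : A.card = (Finset.Iic i).card :=
    Finset.card_image_of_injective _ (Equiv.injective _)
  have hBcard : B.card = (Finset.Ici i).card :=
    Finset.card_image_of_injective _ (Equiv.injective _)
  have hsum : (Finset.Iic i).card + (Finset.Ici i).card = n + 1 := by
    have hu : Finset.Iic i ∪ Finset.Ici i = Finset.univ := by
      ext j
      simp only [Finset.mem_union, Finset.mem_Iic, Finset.mem_Ici, Finset.mem_univ, iff_true]
      exact le_total j i
    have hi : Finset.Iic i ∩ Finset.Ici i = {i} := by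
      ext j; simp [Finset.mem_inter, le_antisymm_iff, and_comm]
    have := Finset.card_union_add_card_inter (Finset.Iic i) (Finset.Ici i)
    rw [hu, hi] at this
    simpa [Finset.card_univ] using this.symm
  have hne : (A ∩ B).Nonempty := by
    by_contra hemp
    have hdisj : Disjoint A B := by
      rw [Finset.disjoint_iff_inter_eq_empty]
      exact Finset.not_nonempty_iff_eq_empty.mp hemp
    have := Finset.card_union_of_disjoint hdisj
    have hle : (A ∪ B).card ≤ n := by
      simpa [Finset.card_univ] using Finset.card_le_card (Finset.subset_univ (A ∪ B))
    omega
  obtain ⟨l, hl⟩ := hne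
  rw [Finset.mem_inter] at hl
  obtain ⟨hlA, hlB⟩ := hl
  obtain ⟨j1, hj1, hj1e⟩ := Finset.mem_image.mp hlA
  obtain ⟨j2, hj2, hj2e⟩ := Finset.mem_image.mp hlB
  rw [Finset.mem_Iic] at hj1
  rw [Finset.mem_Ici] at hj2
  calc (u ∘ Tuple.sort u) i ≤ (u ∘ Tuple.sort u) j2 := Tuple.monotone_sort u hj2
    _ = u l := by simp [hj2e]
    _ ≤ v l := h l
    _ = (v ∘ Tuple.sort v) j1 := by simp [hj1e]
    _ ≤ (v ∘ Tuple.sort v) i := Tuple.monotone_sort v hj1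

lemma sorted_add_const {n : ℕ} (f : Fin n → ℕ) (c : ℕ) (i : Fin n) :
    ((fun j => f j + c) ∘ Tuple.sort (fun j => f j + c)) i = (f ∘ Tuple.sort f) i + c := by
  have h1 : Monotone ((fun j => f j + c) ∘ Tuple.sort f) := by
    intro a b hab
    simpa using add_le_add_right (Tuple.monotone_sort f hab) c
  have := Tuple.unique_monotone (f := fun j => f j + c) h1
      (Tuple.monotone_sort (fun j => f j + c))
  have h2 := congrFun this i
  simp only [Function.comp_apply] at h2 ⊢
  omega

lemma sorted_sum {n : ℕ} (f : Fin n → ℕ) :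
    (∑ i, (f ∘ Tuple.sort f) i) = ∑ i, f i :=
  Equiv.sum_comp (Tuple.sort f) f

lemma sorted_idem {n : ℕ} (f : Fin n → ℕ) (i : Fin n) :
    ((f ∘ Tuple.sort f) ∘ Tuple.sort (f ∘ Tuple.sort f)) i = (f ∘ Tuple.sort f) i := by
  have := Tuple.comp_perm_comp_sort_eq_comp_sort (σ := Tuple.sort f) (f := f)
  exact congrFun this i

end Aux

theorem stmt9 (k : ℕ) (hk : 2 ≤ k) (x x' : Fin (k+1) → ℕ)
    (h : MoveK k x x') (heven : Even (BVal k x')) :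
    BVal k x' < BVal k x := by
  classical
  obtain ⟨i0, hpos, hx'⟩ := h
  have hstep : ∀ j, j ≠ i0 → x j = x' j + 1 := by
    intro j hj
    have h1 := hx' j
    rw [if_neg hj] at h1
    have h2 := hpos j hj
    omega
  have hkeep : x i0 = x' i0 := by
    have h1 := hx' i0
    rw [if_pos rfl] at h1
    omega
  -- boundedness and nonemptiness of the defining sets
  have hbdd : ∀ y : Fin (k+1) → ℕ, BddAbove {b | ∃ z, IsBasic k z b ∧ Pre k z y} := by
    intro y
    refine ⟨∑ i, y i, fun b hb => ?_⟩
    obtain ⟨z, ⟨hsum, _, _, _⟩, hpre⟩ := hb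
    have h1 : (∑ i, z i) ≤ ∑ i, y i := by
      rw [← sorted_sum z, ← sorted_sum y]
      exact Finset.sum_le_sum fun i _ => hpre i
    have h2 : b ≤ k * b := Nat.le_mul_of_pos_left b (by omega)
    omega
  have hne : ∀ y : Fin (k+1) → ℕ,
      Set.Nonempty {b | ∃ z, IsBasic k z b ∧ Pre k z y} := by
    intro y
    refine ⟨0, fun _ => 0, ⟨by simp, fun i => le_refl 0, fun _ i => Even.zero,
      fun hodd => absurd hodd (by simp)⟩, fun i => ?_⟩
    simp
  set b := BVal k x' with hbdef
  have hmem : b ∈ {b | ∃ z, IsBasic k z b ∧ Pre k z x'} :=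
    Nat.sSup_mem (hne x') (hbdd x')
  obtain ⟨z, ⟨hsumz, hboundz, hevenz, _⟩, hzx'⟩ := hmem
  set Sx : Fin (k+1) → ℕ := x ∘ Tuple.sort x with hSx
  set Sx' : Fin (k+1) → ℕ := x' ∘ Tuple.sort x' with hSx'
  set Sz : Fin (k+1) → ℕ := z ∘ Tuple.sort z with hSz
  have hallz : ∀ i, Even (z i) := hevenz heven
  have hle : ∀ j, Sx' j ≤ Sx j := by
    intro j
    refine sorted_le_sorted x' x (fun l => ?_) j
    rw [hx' l]; split <;> omega
  have hle1 : ∀ j, Sx j ≤ Sx' j + 1 := by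
    intro j
    have hpw : ∀ l, x l ≤ x' l + 1 := by
      intro l
      by_cases hl : l = i0
      · subst hl; omega
      · rw [hstep l hl]
    have h1 := sorted_le_sorted x (fun l => x' l + 1) hpw j
    have h2 := sorted_add_const x' 1 j
    rw [h2] at h1
    exact h1
  have hsumx : (∑ j, x j) = (∑ j, x' j) + k := by
    have e1 : ∀ j, x j = x' j + (if j = i0 then 0 else 1) := by
      intro j
      by_cases hj : j = i0
      · subst hj; simp [hkeep]
      · simp [hj, hstep j hj]
    have e2 : (∑ j, x j) = (∑ j, x' j) + ∑ j, (if j = i0 then 0 else 1) := by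
      rw [← Finset.sum_add_distrib]
      exact Finset.sum_congr rfl fun j _ => e1 j
    have e3 : (∑ j : Fin (k+1), (if j = i0 then 0 else 1)) = k := by
      rw [← Finset.add_sum_erase _ _ (Finset.mem_univ i0), if_pos rfl]
      rw [Finset.sum_congr rfl (fun j hj => if_neg (Finset.mem_erase.mp hj).1)]
      simp [Finset.card_erase_of_mem]
    omega
  -- the difference vector
  set d : Fin (k+1) → ℕ := fun j => Sx j - Sx' j with hd
  have hd0 : ∀ j, Sx j = Sx' j + d j := by
    intro j; have := hle j; simp only [hd]; omega
  have hd1 : ∀ j, d j ≤ 1 := by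
    intro j; have := hle1 j; have := hle j; simp only [hd]; omega
  have hdsum : (∑ j, d j) = k := by
    have e1 : (∑ j, Sx j) = ∑ j, x j := sorted_sum x
    have e2 : (∑ j, Sx' j) = ∑ j, x' j := sorted_sum x'
    have e3 : (∑ j, Sx j) = (∑ j, Sx' j) + ∑ j, d j := by
      rw [← Finset.sum_add_distrib]
      exact Finset.sum_congr rfl fun j _ => hd0 j
    omega
  obtain ⟨p, hp0⟩ : ∃ p, d p = 0 := by
    by_contra hc
    push_neg at hc
    have : ∀ j : Fin (k+1), d j = 1 := fun j => by have := hd1 j; have := hc j; omega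
    have : (∑ j, d j) = k + 1 := by
      rw [Finset.sum_congr rfl fun j _ => this j]
      simp [Finset.card_univ]
    omega
  have hp1 : ∀ j, j ≠ p → d j = 1 := by
    intro j hj
    by_contra hdj
    have hdj0 : d j = 0 := by have := hd1 j; omega
    have hpmem : p ∈ Finset.univ.erase j :=
      Finset.mem_erase.mpr ⟨fun h => hj h.symm, Finset.mem_univ p⟩
    have e1 : (∑ l, d l) = d j + ∑ l ∈ Finset.univ.erase j, d l :=
      (Finset.add_sum_erase _ _ (Finset.mem_univ j)).symm
    have e2 : (∑ l ∈ Finset.univ.erase j, d l)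
        = d p + ∑ l ∈ (Finset.univ.erase j).erase p, d l :=
      (Finset.add_sum_erase _ _ hpmem).symm
    have e3 : (∑ l ∈ (Finset.univ.erase j).erase p, d l)
        ≤ ((Finset.univ.erase j).erase p).card • 1 :=
      Finset.sum_le_card_nsmul _ _ 1 (fun l _ => hd1 l)
    have e4 : ((Finset.univ.erase j).erase p).card = k - 1 := by
      rw [Finset.card_erase_of_mem hpmem, Finset.card_erase_of_mem (Finset.mem_univ j)]
      simp [Finset.card_univ]
    rw [e4, smul_eq_mul] at e3
    omega
  -- the new basic vector
  set z' : Fin (k+1) → ℕ := fun j => if j = p then Sz p else Sz j + 1 with hz'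
  have hSzb : ∀ j, Sz j ≤ b := fun j => hboundz _
  have hSzeven : ∀ j, Even (Sz j) := fun j => hallz _
  have hsumz' : (∑ j, z' j) = k * (b + 1) := by
    have e1 : (∑ j, z' j) = z' p + ∑ j ∈ Finset.univ.erase p, z' j :=
      (Finset.add_sum_erase _ _ (Finset.mem_univ p)).symm
    have e2 : (∑ j ∈ Finset.univ.erase p, z' j)
        = (∑ j ∈ Finset.univ.erase p, Sz j) + ∑ j ∈ Finset.univ.erase p, (1:ℕ) := by
      rw [← Finset.sum_add_distrib]
      refine Finset.sum_congr rfl fun j hj => ?_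
      simp only [hz']
      rw [if_neg (Finset.mem_erase.mp hj).1]
    have e3 : (∑ j ∈ Finset.univ.erase p, (1:ℕ)) = k := by
      simp [Finset.card_erase_of_mem, Finset.card_univ]
    have e4 : (∑ j, Sz j) = Sz p + ∑ j ∈ Finset.univ.erase p, Sz j :=
      (Finset.add_sum_erase _ _ (Finset.mem_univ p)).symm
    have e5 : (∑ j, Sz j) = ∑ j, z j := sorted_sum z
    have e6 : z' p = Sz p := by simp [hz']
    rw [e1, e2, e3, e6]
    have : k * (b + 1) = k * b + k := by ring
    omega
  have hbasic' : IsBasic k z' (b + 1) := by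
    refine ⟨hsumz', fun j => ?_, fun hev => ?_, fun _ => ?_⟩
    · simp only [hz']
      split
      · exact (hSzb p).trans (Nat.le_succ b)
      · exact add_le_add_left (hSzb j) 1
    · exact absurd heven (Nat.even_add_one.mp hev)
    · refine ⟨p, ?_, ?_⟩
      · simp only [hz', if_pos rfl]
        exact hSzeven p
      · intro j hj
        by_contra hjp
        simp only [hz', if_neg hjp] at hj
        have := hSzeven j
        rw [Nat.even_add_one] at hj
        exact hj this
  have hpre' : Pre k z' x := by
    have hpw : ∀ j, z' j ≤ Sx j := by
      intro j
      by_cases hjp : j = p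
      · subst hjp
        simp only [hz', if_pos rfl]
        have := hd0 j
        have h3 := hzx' j
        rw [← hSz, ← hSx'] at h3
        omega
      · simp only [hz', if_neg hjp]
        have := hd0 j
        have := hp1 j hjp
        have h3 := hzx' j
        rw [← hSz, ← hSx'] at h3
        omega
    intro i
    have h1 := sorted_le_sorted z' Sx hpw i
    have h2 := sorted_idem x i
    rw [← hSx] at h2
    rw [hSx] at h1
    rw [← hSx] at h1 ⊢
    omega
  have hfin : b + 1 ≤ BVal k x :=
    le_csSup (hbdd x) ⟨z', hbasic', hpre'⟩
  omega
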